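/- Let 1 < p < 2, r > 0 and t ∈ [−π, π]. Then G(r,t) := −(1+r²)^(p/2) + ((1 + r² + 2r cos t)/(1 + cos(π/p)))^(p/2) − 2^(p/2) r^(p/2) cos(pt/2) tan(π/(2p)) ≥ 0. -/

import Mathlib

set_option maxHeartbeats 3000000

open Real Set

lemma aux_sinc {x y : ℝ} (hy : 0 < y) (hyx : y ≤ x) (hx : x ≤ π) :
    y * Real.sin x ≤ x * Real.sin y := by
  have key : ∀ z : ℝ, 0 < z → z ≤ π → z * Real.cos z ≤ Real.sin z := by
    intro z hz hzπ
    rcases lt_or_ge z (π/2) with h | h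
    · have := Real.lt_tan hz h
      rw [Real.tan_eq_sin_div_cos] at this
      have hc : 0 < Real.cos z := Real.cos_pos_of_mem_Ioo ⟨by linarith [Real.pi_pos], h⟩
      calc z * Real.cos z ≤ (Real.sin z / Real.cos z) * Real.cos z := by
            apply mul_le_mul_of_nonneg_right this.le hc.le
        _ = Real.sin z := by field_simp
    · have hc : Real.cos z ≤ 0 := Real.cos_nonpos_of_pi_div_two_le_of_le h (by linarith [Real.pi_pos])
      have hs : 0 ≤ Real.sin z := Real.sin_nonneg_of_nonneg_of_le_pi (by linarith) hzπ
      nlinarith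
  have anti : AntitoneOn (fun z => Real.sin z / z) (Icc y x) := by
    apply antitoneOn_of_deriv_nonpos (convex_Icc y x)
    · apply ContinuousOn.div Real.continuousOn_sin continuousOn_id
      intro z hz; exact ne_of_gt (lt_of_lt_of_le hy hz.1)
    · intro z hz
      rw [interior_Icc] at hz
      have hz0 : z ≠ 0 := ne_of_gt (hy.trans hz.1)
      exact ((Real.differentiable_sin z).div (differentiableAt_fun_id) hz0).differentiableWithinAt
    · intro z hz
      rw [interior_Icc] at hz
      have hz0 : (0:ℝ) < z := hy.trans hz.1
      have hd : HasDerivAt (fun z => Real.sin z / z)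
          ((Real.cos z * z - Real.sin z * 1) / z ^ 2) z :=
        (Real.hasDerivAt_sin z).div (hasDerivAt_id z) (ne_of_gt hz0)
      rw [hd.deriv]
      apply div_nonpos_of_nonpos_of_nonneg _ (sq_nonneg z)
      have := key z hz0 (hz.2.le.trans hx)
      nlinarith
  have h1 : Real.sin x / x ≤ Real.sin y / y :=
    anti ⟨le_refl y, hyx⟩ ⟨hyx, le_refl x⟩ hyx
  have hx0 : (0:ℝ) < x := hy.trans_le hyx
  calc y * Real.sin x = (Real.sin x / x) * (x * y) := by field_simp
    _ ≤ (Real.sin y / y) * (x * y) := by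
        apply mul_le_mul_of_nonneg_right h1 (by positivity)
    _ = x * Real.sin y := by field_simp

lemma aux_u_anti {p : ℝ} (hp1 : 1 < p) (hp2 : p < 2) :
    AntitoneOn (fun φ => Real.sin φ * Real.cos φ ^ (p-1) / Real.sin (p*φ)) (Ioo 0 (π/2)) := by
  have hπ := Real.pi_pos
  have basic : ∀ z ∈ Ioo (0:ℝ) (π/2), 0 < Real.cos z ∧ 0 < Real.sin z ∧ 0 < Real.sin (p*z) := by
    intro z hz
    have hc : 0 < Real.cos z := Real.cos_pos_of_mem_Ioo ⟨by linarith [hz.1], hz.2⟩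
    have hs : 0 < Real.sin z := Real.sin_pos_of_pos_of_lt_pi hz.1 (by linarith [hz.2])
    have hpz : 0 < Real.sin (p*z) := by
      apply Real.sin_pos_of_pos_of_lt_pi (by nlinarith [hz.1])
      nlinarith [hz.2]
    exact ⟨hc, hs, hpz⟩
  apply antitoneOn_of_deriv_nonpos (convex_Ioo 0 (π/2))
  · apply ContinuousOn.div
    · exact (Real.continuous_sin.continuousOn).mul
        (Real.continuous_cos.continuousOn.rpow_const (fun z hz => Or.inl (ne_of_gt (basic z hz).1)))
    · exact (Real.continuous_sin.comp (continuous_const.mul continuous_id)).continuousOn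
    · intro z hz; exact ne_of_gt (basic z hz).2.2
  · rw [interior_Ioo]
    intro z hz
    obtain ⟨hc, hs, hspz⟩ := basic z hz
    have h1 : DifferentiableAt ℝ (fun φ => Real.sin φ * Real.cos φ ^ (p-1)) z := by
      apply (Real.differentiable_sin z).mul
      exact (Real.differentiableAt_rpow_const_of_ne (p-1) (ne_of_gt hc)).comp z (Real.differentiable_cos z)
    have h2 : DifferentiableAt ℝ (fun φ => Real.sin (p*φ)) z :=
      (Real.differentiable_sin (p*z)).comp z ((differentiable_id.const_mul p) z)
    exact (h1.div h2 (ne_of_gt hspz)).differentiableWithinAt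
  · rw [interior_Ioo]
    intro z hz
    obtain ⟨hc, hs, hspz⟩ := basic z hz
    -- derivative computation
    have hN : HasDerivAt (fun φ => Real.sin φ * Real.cos φ ^ (p-1))
        (Real.cos z * Real.cos z ^ (p-1) + Real.sin z * (-Real.sin z * (p-1) * Real.cos z ^ (p-1-1))) z := by
      exact (Real.hasDerivAt_sin z).mul ((Real.hasDerivAt_cos z).rpow_const (Or.inl (ne_of_gt hc)))
    have hmul : HasDerivAt (fun y : ℝ => p * y) p z := by
      simpa using (hasDerivAt_id z).const_mul p
    have hD : HasDerivAt (fun φ => Real.sin (p*φ)) (Real.cos (p*z) * p) z :=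
      (Real.hasDerivAt_sin (p*z)).comp z hmul
    have hu : HasDerivAt (fun φ => Real.sin φ * Real.cos φ ^ (p-1) / Real.sin (p*φ)) _ z := hN.div hD (ne_of_gt hspz)
    rw [hu.deriv]
    apply div_nonpos_of_nonpos_of_nonneg _ (sq_nonneg _)
    -- numerator ≤ 0
    have hid : Real.cos z ^ (p-1) = Real.cos z ^ (p-2) * Real.cos z := by
      rw [← Real.rpow_add_one (ne_of_gt hc) (p-2)]; ring_nf
    have hV : (2-p)/2 * Real.sin (p*z) - p/2 * Real.sin ((2-p)*z) ≤ 0 := by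
      have := aux_sinc (x := p*z) (y := (2-p)*z) (by nlinarith [hz.1]) (by nlinarith [hz.1]) (by nlinarith [hz.2])
      nlinarith [hz.1]
    have htrig : Real.sin ((2-p)*z)
        = Real.sin (2*z) * Real.cos (p*z) - Real.cos (2*z) * Real.sin (p*z) := by
      have : (2-p)*z = 2*z - p*z := by ring
      rw [this, Real.sin_sub]
    rw [Real.sin_two_mul, Real.cos_two_mul] at htrig
    have hsq : Real.sin z ^ 2 = 1 - Real.cos z ^ 2 := by
      have := Real.sin_sq_add_cos_sq z; linarith
    have hpow : (0:ℝ) ≤ Real.cos z ^ (p-2) := Real.rpow_nonneg hc.le _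
    -- numerator = cos z ^ (p-2) * V
    have : (Real.cos z * Real.cos z ^ (p-1) + Real.sin z * (-Real.sin z * (p-1) * Real.cos z ^ (p-1-1))) * Real.sin (p*z)
        - Real.sin z * Real.cos z ^ (p-1) * (Real.cos (p*z) * p)
        = Real.cos z ^ (p-2) * ((2-p)/2 * Real.sin (p*z) - p/2 * Real.sin ((2-p)*z)) := by
      have h12 : p - 1 - 1 = p - 2 := by ring
      rw [h12, hid, htrig]
      linear_combination (-(Real.cos z ^ (p-2) * Real.sin (p*z) * (p-1))) * Real.sin_sq_add_cos_sq z
    rw [this]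
    exact mul_nonpos_of_nonneg_of_nonpos hpow hV

lemma aux_hB {p φ : ℝ} (hp1 : 1 < p) (hp2 : p < 2) (hφ : φ ∈ Icc 0 (π/2)) :
    Real.cos (π/(2*p)) ^ p + Real.sin (π/(2*p)) * Real.cos (π/(2*p)) ^ (p-1) * Real.cos (p*φ)
      ≤ Real.cos φ ^ p := by
  have hπ := Real.pi_pos
  set β := π/(2*p) with hβdef
  have hβ1 : π/4 < β := by
    rw [hβdef]; apply div_lt_div_of_pos_left hπ (by linarith) (by linarith)
  have hβ2 : β < π/2 := by
    rw [hβdef]; apply div_lt_div_of_pos_left hπ (by linarith) (by linarith)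
  have hβ0 : 0 < β := by linarith
  have hcβ : 0 < Real.cos β := Real.cos_pos_of_mem_Ioo ⟨by linarith, hβ2⟩
  have hsβ : 0 < Real.sin β := Real.sin_pos_of_pos_of_lt_pi hβ0 (by linarith)
  have hpβ : p * β = π/2 := by rw [hβdef]; field_simp
  set K := Real.sin β * Real.cos β ^ (p-1) with hK
  set h : ℝ → ℝ := fun φ => Real.cos φ ^ p - K * Real.cos (p*φ) with hh
  -- continuity of h
  have hcont : Continuous h := by
    apply Continuous.sub
    · exact Real.continuous_cos.rpow_const (fun z => Or.inr (by linarith))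
    · exact continuous_const.mul (Real.continuous_cos.comp (continuous_const.mul continuous_id))
  -- derivative of h
  have hderiv : ∀ z : ℝ, HasDerivAt h
      (-Real.sin z * p * Real.cos z ^ (p-1) + K * (Real.sin (p*z) * p)) z := by
    intro z
    have h1 : HasDerivAt (fun φ => Real.cos φ ^ p) (-Real.sin z * p * Real.cos z ^ (p-1)) z :=
      (Real.hasDerivAt_cos z).rpow_const (Or.inr (by linarith))
    have hmul : HasDerivAt (fun y : ℝ => p * y) p z := by
      simpa using (hasDerivAt_id z).const_mul p
    have h2 : HasDerivAt (fun φ => Real.cos (p*φ)) (-Real.sin (p*z) * p) z :=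
      (Real.hasDerivAt_cos (p*z)).comp z hmul
    have := h1.sub ((h2.const_mul K))
    exact this.congr_deriv (by ring)
  -- u comparisons
  have hu := aux_u_anti hp1 hp2
  have huβ : Real.sin β * Real.cos β ^ (p-1) / Real.sin (p*β) = K := by
    rw [hpβ, Real.sin_pi_div_two, div_one]
  -- h antitone on [0, β]
  have hanti : AntitoneOn h (Icc 0 β) := by
    apply antitoneOn_of_deriv_nonpos (convex_Icc 0 β) hcont.continuousOn
    · intro z _; exact ((hderiv z).differentiableAt).differentiableWithinAt
    · intro z hz
      rw [interior_Icc] at hz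
      have hzI : z ∈ Ioo 0 (π/2) := ⟨hz.1, hz.2.trans hβ2⟩
      have hβI : β ∈ Ioo 0 (π/2) := ⟨hβ0, hβ2⟩
      have hcmp : K ≤ Real.sin z * Real.cos z ^ (p-1) / Real.sin (p*z) := by
        rw [← huβ]; exact hu hzI hβI hz.2.le
      have hspz : 0 < Real.sin (p*z) :=
        Real.sin_pos_of_pos_of_lt_pi (by nlinarith [hzI.1]) (by nlinarith [hzI.2])
      rw [(hderiv z).deriv]
      have h3 : K * Real.sin (p*z) ≤ Real.sin z * Real.cos z ^ (p-1) :=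
        (le_div_iff₀ hspz).mp hcmp
      nlinarith
  -- h monotone on [β, π/2]
  have hmono : MonotoneOn h (Icc β (π/2)) := by
    apply monotoneOn_of_deriv_nonneg (convex_Icc β (π/2)) hcont.continuousOn
    · intro z _; exact ((hderiv z).differentiableAt).differentiableWithinAt
    · intro z hz
      rw [interior_Icc] at hz
      have hzI : z ∈ Ioo 0 (π/2) := ⟨hβ0.trans hz.1, hz.2⟩
      have hβI : β ∈ Ioo 0 (π/2) := ⟨hβ0, hβ2⟩
      have hcmp : Real.sin z * Real.cos z ^ (p-1) / Real.sin (p*z) ≤ K := by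
        rw [← huβ]; exact hu hβI hzI hz.1.le
      have hspz : 0 < Real.sin (p*z) :=
        Real.sin_pos_of_pos_of_lt_pi (by nlinarith [hzI.1]) (by nlinarith [hzI.2])
      rw [(hderiv z).deriv]
      rw [div_le_iff₀ hspz] at hcmp
      nlinarith
  -- value at β
  have hhβ : h β = Real.cos β ^ p := by
    rw [hh]; simp only [hpβ, Real.cos_pi_div_two]; ring_nf
  -- conclude
  have goal2 : Real.cos β ^ p ≤ h φ := by
    rcases le_total φ β with hle | hle
    · rw [← hhβ]; exact hanti ⟨hφ.1, hle⟩ ⟨by linarith, le_refl β⟩ hle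
    · rw [← hhβ]; exact hmono ⟨le_refl β, by linarith⟩ ⟨hle, hφ.2⟩ hle
  rw [hh] at goal2
  simp only at goal2
  linarith

lemma aux_lemB {p t : ℝ} (hp1 : 1 < p) (hp2 : p < 2) (ht : t ∈ Icc (-π) π) :
    (1 + Real.cos (π/p)) ^ (p/2) * (1 + Real.tan (π/(2*p)) * Real.cos (p*t/2))
      ≤ (1 + Real.cos t) ^ (p/2) := by
  have hπ := Real.pi_pos
  set β := π/(2*p) with hβdef
  have hβ1 : π/4 < β := div_lt_div_of_pos_left hπ (by linarith) (by linarith)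
  have hβ2 : β < π/2 := div_lt_div_of_pos_left hπ (by linarith) (by linarith)
  have hβ0 : 0 < β := by linarith
  have hcβ : 0 < Real.cos β := Real.cos_pos_of_mem_Ioo ⟨by linarith, hβ2⟩
  have hsβ : 0 < Real.sin β := Real.sin_pos_of_pos_of_lt_pi hβ0 (by linarith)
  set φ := |t|/2 with hφdef
  have hφmem : φ ∈ Icc (0:ℝ) (π/2) := by
    constructor
    · positivity
    · rw [hφdef]; have : |t| ≤ π := abs_le.mpr ⟨ht.1, ht.2⟩; linarith
  have hcφ : 0 ≤ Real.cos φ := Real.cos_nonneg_of_mem_Icc ⟨by linarith [hφmem.1], hφmem.2⟩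
  -- rewrite 1 + cos t = 2 cos φ ^ 2
  have h2φ : 2*φ = |t| := by rw [hφdef]; ring
  have hct : 1 + Real.cos t = 2 * Real.cos φ ^ 2 := by
    rw [← Real.cos_abs, ← h2φ, Real.cos_two_mul]; ring
  have hca : 1 + Real.cos (π/p) = 2 * Real.cos β ^ 2 := by
    have : π/p = 2*β := by rw [hβdef]; field_simp
    rw [this, Real.cos_two_mul]; ring
  have hcpt : Real.cos (p*t/2) = Real.cos (p*φ) := by
    rw [hφdef]
    rcases abs_cases t with ⟨h1, _⟩ | ⟨h1, _⟩
    · rw [h1]; ring_nf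
    · rw [h1, show p * (-t/2) = -(p*t/2) by ring, Real.cos_neg]
  -- rpow algebra
  have key : ∀ x : ℝ, 0 ≤ x → (2 * x ^ 2) ^ (p/2) = 2 ^ (p/2) * x ^ p := by
    intro x hx
    rw [Real.mul_rpow (by norm_num) (by positivity)]
    congr 1
    rw [← Real.rpow_natCast x 2, ← Real.rpow_mul hx]
    norm_num
    rw [show (2:ℝ) * (p/2) = p by ring]
  rw [hct, hca, key _ hcβ.le, key _ hcφ, hcpt]
  have h2q : (0:ℝ) < 2 ^ (p/2) := Real.rpow_pos_of_pos (by norm_num) _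
  rw [mul_assoc]
  apply mul_le_mul_of_nonneg_left _ h2q.le
  -- now : cos β ^ p * (1 + tan β * cos (p φ)) ≤ cos φ ^ p
  have htan : Real.tan β = Real.sin β / Real.cos β := Real.tan_eq_sin_div_cos β
  have hsplit : Real.cos β ^ p = Real.cos β ^ (p-1) * Real.cos β := by
    rw [← Real.rpow_add_one (ne_of_gt hcβ) (p-1)]; ring_nf
  have := aux_hB (φ := φ) hp1 hp2 hφmem
  rw [← hβdef] at this
  calc Real.cos β ^ p * (1 + Real.tan β * Real.cos (p*φ))
      = Real.cos β ^ p + (Real.cos β ^ (p-1) * Real.cos β) * (Real.sin β / Real.cos β) * Real.cos (p*φ) := by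
        rw [← hsplit, htan]; ring
    _ = Real.cos β ^ p + Real.sin β * Real.cos β ^ (p-1) * Real.cos (p*φ) := by
        field_simp
    _ ≤ Real.cos φ ^ p := this

private lemma aux_core1 (s : ℝ) (hs : 0 < s) (hs8 : s < 0.79) :
    -3.141592^2*((s+s^2/2-s^3/6-s^4*(10/96))*(2-(s+s^2/2-s^3/6-s^4*(10/96))))
      + 4*s*3.141593*(1 - 2*(s+s^2/2-s^3/6-s^4*(10/96)) - (s+s^2/2-s^3/6-s^4*(10/96))^2
        - 2*(s^2/2-s^4*(5/96)) + 2*(s+s^2/2-s^3/6-s^4*(10/96))*(s^2/2-s^4*(5/96)))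
      + 16*s^2*(1+2*(s+s^2/2-s^3/6-s^4*(10/96))-2*(s^2/2-s^4*(5/96))
        - 2*(s+s^2/2-s^3/6-s^4*(10/96))*(s^2/2-s^4*(5/96))) ≤ 0 := by
  nlinarith [sq_nonneg s, sq_nonneg (s^2), sq_nonneg (s^3), sq_nonneg (s^4), mul_pos hs hs,
    sq_nonneg (1-s), pow_pos hs 3, pow_pos hs 5, pow_pos hs 7, mul_pos (mul_pos hs hs) hs]

private lemma aux_core2 (s : ℝ) (hs : 0 < s) (hs8 : s < 0.79) :
    -3.141592^2*((s+s^2/2-s^3/6-s^4*(10/96))*(2-(s+s^2/2-s^3/6-s^4*(10/96))))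
      + 4*s*3.141592*(1 - 2*(s+s^2/2-s^3/6-s^4*(10/96)) - (s+s^2/2-s^3/6-s^4*(10/96))^2
        - 2*(s^2/2-s^4*(5/96)) + 2*(s+s^2/2-s^3/6-s^4*(10/96))*(s^2/2-s^4*(5/96)))
      + 16*s^2*(1+2*(s+s^2/2-s^3/6-s^4*(10/96))-2*(s^2/2-s^4*(5/96))
        - 2*(s+s^2/2-s^3/6-s^4*(10/96))*(s^2/2-s^4*(5/96))) ≤ 0 := by
  nlinarith [sq_nonneg s, sq_nonneg (s^2), sq_nonneg (s^3), sq_nonneg (s^4), mul_pos hs hs,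
    sq_nonneg (1-s), pow_pos hs 3, pow_pos hs 5, pow_pos hs 7, mul_pos (mul_pos hs hs) hs]

lemma aux_poly {s c n y : ℝ} (hs : 0 < s) (h4s : 4*s < y)
    (hy1 : 3.141592 < y) (hy2 : y < 3.141593)
    (hcu : c ≤ 1 - s^2/2 + s^4*(5/96)) (hcl : 1 - s^2/2 - s^4*(5/96) ≤ c)
    (hnu : n ≤ s) (hnl : s - s^3/6 - s^4*(5/96) ≤ n) :
    ((y - 4*s)*(c - n) + 8*s) * ((y + 8*s)*c - y*n) ≤ (y + 4*s)^2 := by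
  have hs8 : s < 0.79 := by nlinarith
  have hy0 : 0 < y := by nlinarith
  have hA1 : (y - 4*s)*(c - n) + 8*s
      ≤ (y - 4*s)*(1 - s + s^3/6 - s^2/2 + s^4*(10/96)) + 8*s := by nlinarith
  have hA2 : (y + 8*s)*c - y*n
      ≤ (y + 8*s)*(1 - s^2/2 + s^4*(5/96)) - y*(s - s^3/6 - s^4*(5/96)) := by nlinarith
  have hA2pos : (0:ℝ) ≤ (y + 8*s)*(1 - s^2/2 + s^4*(5/96)) - y*(s - s^3/6 - s^4*(5/96)) := by
    nlinarith
  have hF1pos : (0:ℝ) ≤ (y - 4*s)*(c - n) + 8*s := by nlinarith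
  have step : ((y - 4*s)*(c - n) + 8*s) * ((y + 8*s)*c - y*n)
      ≤ ((y - 4*s)*(1 - s + s^3/6 - s^2/2 + s^4*(10/96)) + 8*s)
        * ((y + 8*s)*(1 - s^2/2 + s^4*(5/96)) - y*(s - s^3/6 - s^4*(5/96))) :=
    calc ((y - 4*s)*(c - n) + 8*s) * ((y + 8*s)*c - y*n)
        ≤ ((y - 4*s)*(c - n) + 8*s)
          * ((y + 8*s)*(1 - s^2/2 + s^4*(5/96)) - y*(s - s^3/6 - s^4*(5/96))) :=
          mul_le_mul_of_nonneg_left hA2 hF1pos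
      _ ≤ _ := mul_le_mul_of_nonneg_right hA1 hA2pos
  refine step.trans ?_
  have hid : ((y - 4*s)*(1 - s + s^3/6 - s^2/2 + s^4*(10/96)) + 8*s)
        * ((y + 8*s)*(1 - s^2/2 + s^4*(5/96)) - y*(s - s^3/6 - s^4*(5/96))) - (y+4*s)^2
      = -y^2*((s+s^2/2-s^3/6-s^4*(10/96))*(2-(s+s^2/2-s^3/6-s^4*(10/96))))
        + 4*s*y*(1 - 2*(s+s^2/2-s^3/6-s^4*(10/96)) - (s+s^2/2-s^3/6-s^4*(10/96))^2
          - 2*(s^2/2-s^4*(5/96)) + 2*(s+s^2/2-s^3/6-s^4*(10/96))*(s^2/2-s^4*(5/96)))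
        + 16*s^2*(1+2*(s+s^2/2-s^3/6-s^4*(10/96))-2*(s^2/2-s^4*(5/96))
          - 2*(s+s^2/2-s^3/6-s^4*(10/96))*(s^2/2-s^4*(5/96))) := by ring
  have hD0 : 0 ≤ s+s^2/2-s^3/6-s^4*(10/96) := by nlinarith
  have hD2 : s+s^2/2-s^3/6-s^4*(10/96) ≤ 2 := by nlinarith
  have hG0 : 0 ≤ (s+s^2/2-s^3/6-s^4*(10/96))*(2-(s+s^2/2-s^3/6-s^4*(10/96))) :=
    mul_nonneg hD0 (by linarith)
  have hy2sq : 3.141592^2 ≤ y^2 := by nlinarith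
  have hyy : -y^2*((s+s^2/2-s^3/6-s^4*(10/96))*(2-(s+s^2/2-s^3/6-s^4*(10/96))))
      ≤ -3.141592^2*((s+s^2/2-s^3/6-s^4*(10/96))*(2-(s+s^2/2-s^3/6-s^4*(10/96)))) := by
    nlinarith [mul_le_mul_of_nonneg_right hy2sq hG0]
  rw [← sub_nonpos, hid]
  rcases le_or_gt (1 - 2*(s+s^2/2-s^3/6-s^4*(10/96)) - (s+s^2/2-s^3/6-s^4*(10/96))^2
      - 2*(s^2/2-s^4*(5/96)) + 2*(s+s^2/2-s^3/6-s^4*(10/96))*(s^2/2-s^4*(5/96))) 0 with hMs | hMs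
  · have h1 : 4*s*y*(1 - 2*(s+s^2/2-s^3/6-s^4*(10/96)) - (s+s^2/2-s^3/6-s^4*(10/96))^2
        - 2*(s^2/2-s^4*(5/96)) + 2*(s+s^2/2-s^3/6-s^4*(10/96))*(s^2/2-s^4*(5/96)))
        ≤ 4*s*3.141592*(1 - 2*(s+s^2/2-s^3/6-s^4*(10/96)) - (s+s^2/2-s^3/6-s^4*(10/96))^2
        - 2*(s^2/2-s^4*(5/96)) + 2*(s+s^2/2-s^3/6-s^4*(10/96))*(s^2/2-s^4*(5/96))) := by
      nlinarith [mul_le_mul_of_nonneg_left (mul_le_mul_of_nonpos_right hy1.le hMs)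
        (by positivity : (0:ℝ) ≤ 4*s)]
    linarith [aux_core2 s hs hs8]
  · have h1 : 4*s*y*(1 - 2*(s+s^2/2-s^3/6-s^4*(10/96)) - (s+s^2/2-s^3/6-s^4*(10/96))^2
        - 2*(s^2/2-s^4*(5/96)) + 2*(s+s^2/2-s^3/6-s^4*(10/96))*(s^2/2-s^4*(5/96)))
        ≤ 4*s*3.141593*(1 - 2*(s+s^2/2-s^3/6-s^4*(10/96)) - (s+s^2/2-s^3/6-s^4*(10/96))^2
        - 2*(s^2/2-s^4*(5/96)) + 2*(s+s^2/2-s^3/6-s^4*(10/96))*(s^2/2-s^4*(5/96))) := by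
      nlinarith [mul_le_mul_of_nonneg_left (mul_le_mul_of_nonneg_right hy2.le hMs.le)
        (by positivity : (0:ℝ) ≤ 4*s)]
    linarith [aux_core1 s hs hs8]

lemma aux_lemA {p : ℝ} (hp1 : 1 < p) (hp2 : p < 2) :
    (1 + Real.cos (π/p)) ^ (p/2) * (1 + (1 - p/2) * Real.tan (π/(2*p))) ≤ 1 := by
  have hπ := Real.pi_pos
  set β := π/(2*p) with hβdef
  have hβ1 : π/4 < β := div_lt_div_of_pos_left hπ (by linarith) (by linarith)
  have hβ2 : β < π/2 := div_lt_div_of_pos_left hπ (by linarith) (by linarith)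
  have hβ0 : 0 < β := by linarith
  have hcβ : 0 < Real.cos β := Real.cos_pos_of_mem_Ioo ⟨by linarith, hβ2⟩
  have hsβ : 0 < Real.sin β := Real.sin_pos_of_pos_of_lt_pi hβ0 (by linarith)
  set s := β - π/4 with hsdef
  have hs0 : 0 < s := by simp [hsdef]; linarith
  have hs4 : 4*s < π := by rw [hsdef]; have := hβ2; linarith
  have hkey : p * (π + 4*s) = 2*π := by
    rw [hsdef, hβdef]; field_simp; ring
  have hsum : (0:ℝ) < π + 4*s := by linarith
  -- trig of β in terms of s
  have hβs : β = π/4 + s := by rw [hsdef]; ring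
  have hcβs : Real.cos β = Real.sqrt 2/2 * (Real.cos s - Real.sin s) := by
    rw [hβs, Real.cos_add, Real.cos_pi_div_four, Real.sin_pi_div_four]; ring
  have hsβs : Real.sin β = Real.sqrt 2/2 * (Real.cos s + Real.sin s) := by
    rw [hβs, Real.sin_add, Real.cos_pi_div_four, Real.sin_pi_div_four]; ring
  have hsqrt2 : (0:ℝ) < Real.sqrt 2 := by positivity
  have hx0 : 0 < Real.cos s - Real.sin s := by
    have : 0 < Real.sqrt 2/2 * (Real.cos s - Real.sin s) := hcβs ▸ hcβ
    nlinarith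
  -- 1 + cos(π/p) = 2 cos β ^ 2
  have hca : 1 + Real.cos (π/p) = 2 * Real.cos β ^ 2 := by
    have h2β : π/p = 2*β := by rw [hβdef]; field_simp
    rw [h2β, Real.cos_two_mul]; ring
  have htan : Real.tan β = Real.sin β / Real.cos β := Real.tan_eq_sin_div_cos β
  -- rpow algebra: LHS = x^(p-1) * Y
  have key : (2 * Real.cos β ^ 2) ^ (p/2) = 2 ^ (p/2) * Real.cos β ^ p := by
    rw [Real.mul_rpow (by norm_num) (by positivity)]
    congr 1
    rw [← Real.rpow_natCast (Real.cos β) 2, ← Real.rpow_mul hcβ.le]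
    norm_num
    rw [show (2:ℝ) * (p/2) = p by ring]
  have hsplit : Real.cos β ^ p = Real.cos β ^ (p-1) * Real.cos β := by
    rw [← Real.rpow_add_one (ne_of_gt hcβ) (p-1)]; ring_nf
  have hcb1 : Real.cos β ^ (p-1)
      = (Real.sqrt 2/2) ^ (p-1) * (Real.cos s - Real.sin s) ^ (p-1) := by
    rw [hcβs, Real.mul_rpow (by positivity) hx0.le]
  have hpow2 : (2:ℝ) ^ (p/2) * ((Real.sqrt 2/2) ^ (p-1) * (Real.sqrt 2/2)) = 1 := by
    have h22 : Real.sqrt 2/2 = (2:ℝ) ^ (-(1/2) : ℝ) := by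
      rw [Real.rpow_neg (by norm_num : (0:ℝ) ≤ 2), ← Real.sqrt_eq_rpow]
      rw [inv_eq_one_div]
      rw [div_eq_div_iff (by norm_num) hsqrt2.ne']
      rw [Real.mul_self_sqrt (by norm_num : (0:ℝ) ≤ 2)]; norm_num
    rw [h22, ← Real.rpow_mul (by norm_num : (0:ℝ) ≤ 2), ← Real.rpow_add (by norm_num : (0:ℝ) < 2),
      ← Real.rpow_add (by norm_num : (0:ℝ) < 2)]
    rw [show p/2 + (-(1/2) * (p-1) + -(1/2)) = 0 by ring, Real.rpow_zero]
  -- rewrite LHS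
  set x := Real.cos s - Real.sin s with hxdef
  set Y := (2-p/2)*Real.cos s - p/2*Real.sin s with hYdef
  have hY : Real.cos β + (1-p/2)*Real.sin β = Real.sqrt 2/2 * Y := by
    rw [hcβs, hsβs, hYdef]; ring
  have htanfold : 1 + (1-p/2)*Real.tan β = (Real.cos β + (1-p/2)*Real.sin β)/Real.cos β := by
    rw [htan]; field_simp
  have hL1 : (1 + Real.cos (π/p))^(p/2) * (1 + (1-p/2)*Real.tan β)
      = x ^ (p-1) * Y := by
    rw [hca, key, htanfold, hY, hsplit, hcb1, hcβs]
    rw [mul_div_mul_left Y x (ne_of_gt (by positivity : (0:ℝ) < √2/2))]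
    calc (2:ℝ)^(p/2) * ((√2/2)^(p-1) * x^(p-1) * (√2/2 * x)) * (Y/x)
        = ((2:ℝ)^(p/2) * ((√2/2)^(p-1) * (√2/2))) * (x^(p-1)) * (Y/x*x) := by ring
      _ = x ^ (p-1) * Y := by rw [hpow2, div_mul_cancel₀ _ hx0.ne']; ring
  have hgoal2 : x ^ (p-1) * Y ≤ 1 := by
    rcases le_or_gt Y 0 with hYs | hYs
    · have : x ^ (p-1) * Y ≤ 0 :=
        mul_nonpos_of_nonneg_of_nonpos (Real.rpow_nonneg hx0.le _) hYs
      linarith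
    · have hbern : x ^ (p-1) ≤ (p-1)*x + (2-p) := by
        have h := Real.geom_mean_le_arith_mean2_weighted
          (by linarith : (0:ℝ) ≤ p-1) (by linarith : (0:ℝ) ≤ 2-p) hx0.le zero_le_one
          (by ring : (p-1) + (2-p) = 1)
        simpa [Real.one_rpow] using h
      have hstep : x ^ (p-1) * Y ≤ ((p-1)*x + (2-p)) * Y :=
        mul_le_mul_of_nonneg_right hbern hYs.le
      -- bounds for aux_poly
      have hs1 : |s| ≤ 1 := by
        rw [abs_of_pos hs0]; nlinarith [Real.pi_lt_d6]
      have hcb := Real.cos_bound hs1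
      have hsb := Real.sin_bound hs1
      rw [abs_of_pos hs0] at hcb hsb
      rw [abs_le] at hcb hsb
      have hcu : Real.cos s ≤ 1 - s^2/2 + s^4*(5/96) := by linarith [hcb.2]
      have hcl : 1 - s^2/2 - s^4*(5/96) ≤ Real.cos s := by linarith [hcb.1]
      have hnu : Real.sin s ≤ s := (Real.sin_lt hs0).le
      have hnl : s - s^3/6 - s^4*(5/96) ≤ Real.sin s := by
          nlinarith [hsb.1, mul_le_mul_of_nonneg_left ((le_abs_self s).trans hs1) (pow_nonneg hs0.le 4)]
      have hpoly := aux_poly hs0 hs4 Real.pi_gt_d6 Real.pi_lt_d6 hcu hcl hnu hnl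
      have hfrac : ((p-1)*x + (2-p)) * Y
          = (((π-4*s)*(Real.cos s - Real.sin s) + 8*s) * ((π+8*s)*Real.cos s - π*Real.sin s))/(π+4*s)^2 := by
        rw [eq_div_iff (by positivity), hxdef, hYdef]
        have hp' : p = 2*π/(π+4*s) := by
          rw [eq_div_iff hsum.ne']; linarith
        rw [hp']; field_simp; ring
      rw [hfrac] at hstep
      refine hstep.trans ?_
      rw [div_le_one (by positivity)]
      exact hpoly
  calc (1 + Real.cos (π/p)) ^ (p/2) * (1 + (1 - p/2) * Real.tan (π/(2*p)))
      = x ^ (p-1) * Y := hL1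
    _ ≤ 1 := hgoal2

theorem stmt_13 (p r t : ℝ) (hp1 : 1 < p) (hp2 : p < 2) (hr : 0 < r)
    (ht : t ∈ Set.Icc (-π) π) :
    -(1 + r ^ 2) ^ (p / 2)
      + ((1 + r ^ 2 + 2 * r * Real.cos t) / (1 + Real.cos (π / p))) ^ (p / 2)
      - (2 : ℝ) ^ (p / 2) * r ^ (p / 2) * Real.cos (p * t / 2) * Real.tan (π / (2 * p)) ≥ 0 := by
  have hπ := Real.pi_pos
  have hA0 : (0:ℝ) < 1 + r^2 := by positivity
  set q := p/2 with hq
  set a := 1 + Real.cos (π/p) with ha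
  set T := Real.tan (π/(2*p)) with hT
  set c := Real.cos t with hc
  set C := Real.cos (p*t/2) with hC
  set A := 1 + r^2 with hA
  set k := 2*r/A with hk
  have hk0 : 0 < k := by rw [hk]; positivity
  have hk1 : k ≤ 1 := by
    rw [hk, div_le_one hA0, hA]; nlinarith [sq_nonneg (1-r)]
  have hβ1 : π/4 < π/(2*p) := div_lt_div_of_pos_left hπ (by linarith) (by linarith)
  have hβ2 : π/(2*p) < π/2 := div_lt_div_of_pos_left hπ (by linarith) (by linarith)
  have ha0 : (0:ℝ) < a := by
    rw [ha]
    have h1 : π/p < π := div_lt_self hπ (by linarith)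
    have h2 : Real.cos π < Real.cos (π/p) :=
      Real.cos_lt_cos_of_nonneg_of_le_pi (by positivity) le_rfl h1
    rw [Real.cos_pi] at h2; linarith
  have ha1 : a ≤ 1 := by
    rw [ha]
    have h1 : π/2 ≤ π/p := by
      apply div_le_div_of_nonneg_left hπ.le (by linarith) (by linarith)
    have h2 : Real.cos (π/p) ≤ 0 :=
      Real.cos_nonpos_of_pi_div_two_le_of_le h1 (by linarith [div_lt_self hπ (by linarith : (1:ℝ) < p)])
    linarith
  have hT0 : 0 < T := by
    rw [hT]; exact Real.tan_pos_of_pos_of_lt_pi_div_two (by positivity) hβ2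
  have hC1 : C ≤ 1 := by rw [hC]; exact Real.cos_le_one _
  have hc1 : -1 ≤ c := by rw [hc]; exact Real.neg_one_le_cos t
  have hkc : 0 ≤ 1 + k*c := by nlinarith
  have haq : (0:ℝ) < a ^ q := Real.rpow_pos_of_pos ha0 q
  have haq1 : a ^ q ≤ 1 := Real.rpow_le_one ha0.le ha1 (by rw [hq]; linarith)
  -- chord bound
  have hchord : (1-k) * 1 + k * (1+c) ^ q ≤ (1 + k*c) ^ q := by
    have hcc := (Real.concaveOn_rpow (p := q) (by rw [hq]; linarith) (by rw [hq]; linarith)).2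
      (mem_Ici.mpr (by norm_num : (0:ℝ) ≤ 1)) (mem_Ici.mpr (by linarith : (0:ℝ) ≤ 1+c))
      (by linarith : (0:ℝ) ≤ 1-k) hk0.le (by ring)
    simp only [smul_eq_mul] at hcc
    calc (1-k) * 1 + k * (1+c)^q = (1-k) * (1:ℝ)^q + k * (1+c)^q := by
          rw [Real.one_rpow]
      _ ≤ ((1-k) * 1 + k * (1+c)) ^ q := hcc
      _ = (1 + k*c) ^ q := by ring_nf
  -- Lemma B instance
  have hB : a^q * (1 + T*C) ≤ (1+c)^q := aux_lemB hp1 hp2 ht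
  -- main bracket inequality: a^q * (1 + T*C*k^q) ≤ (1+k*c)^q
  have hmain : a^q * (1 + T*C*k^q) ≤ (1 + k*c)^q := by
    rcases le_or_gt 0 C with hC0 | hC0
    · -- tangent bound on k^q
      have htang : k^q ≤ q*k + (1-q) := by
        have h := Real.geom_mean_le_arith_mean2_weighted
          (by rw [hq]; linarith : (0:ℝ) ≤ q) (by rw [hq]; linarith : (0:ℝ) ≤ 1-q)
          hk0.le zero_le_one (by ring)
        simpa [Real.one_rpow] using h
      have hTC : 0 ≤ T*C := mul_nonneg hT0.le hC0
      have hAq : a^q * (1 + (1-q)*T) ≤ 1 := by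
        have := aux_lemA hp1 hp2
        rw [← ha, ← hT, ← hq] at this
        calc a^q * (1 + (1-q)*T) = a^q * (1 + (1 - p/2)*T) := by rw [hq]
          _ ≤ 1 := this
      have h1 : a^q * (1 + T*C*(1-q)) ≤ 1 := by
        have hq1 : 0 ≤ 1 - q := by rw [hq]; linarith
        have e0 : T*C*(1-q) ≤ (1-q)*T := by
          nlinarith [mul_nonneg (mul_nonneg hq1 hT0.le) (sub_nonneg.mpr hC1)]
        have e1 : a^q * (1 + T*C*(1-q)) ≤ a^q * (1 + (1-q)*T) :=
          mul_le_mul_of_nonneg_left (by linarith) haq.le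
        linarith
      calc a^q * (1 + T*C*k^q) ≤ a^q * (1 + T*C*(q*k + (1-q))) := by
            have e := mul_le_mul_of_nonneg_left htang hTC
            exact mul_le_mul_of_nonneg_left (by linarith) haq.le
        _ = (1-k) * (a^q * (1 + T*C*(1-q))) + k * (a^q * (1 + T*C)) := by ring
        _ ≤ (1-k) * 1 + k * ((1+c)^q) := by
            have e1 : (1-k) * (a^q * (1 + T*C*(1-q))) ≤ (1-k) * 1 :=
              mul_le_mul_of_nonneg_left h1 (by linarith)
            have e2 : k * (a^q * (1 + T*C)) ≤ k * ((1+c)^q) :=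
              mul_le_mul_of_nonneg_left hB hk0.le
            linarith
        _ ≤ (1 + k*c)^q := hchord
    · -- C < 0 : use k ≤ k^q
      have hkq : k ≤ k^q := by
        have := Real.rpow_le_rpow_of_exponent_ge hk0 hk1 (by rw [hq]; linarith : q ≤ 1)
        rwa [Real.rpow_one] at this
      have hTC : T*C < 0 := mul_neg_of_pos_of_neg hT0 hC0
      calc a^q * (1 + T*C*k^q) ≤ a^q * (1 + T*C*k) := by
            have e := mul_le_mul_of_nonpos_left hkq hTC.le
            exact mul_le_mul_of_nonneg_left (by linarith) haq.le
        _ = (1-k) * (a^q) + k * (a^q * (1 + T*C)) := by ring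
        _ ≤ (1-k) * 1 + k * ((1+c)^q) := by
            have e1 : (1-k) * (a^q) ≤ (1-k) * 1 := mul_le_mul_of_nonneg_left haq1 (by linarith)
            have e2 : k * (a^q * (1 + T*C)) ≤ k * ((1+c)^q) :=
              mul_le_mul_of_nonneg_left hB hk0.le
            linarith
        _ ≤ (1 + k*c)^q := hchord
  -- convert to the original statement
  have hek : A * (1 + k*c) = A + 2*r*c := by
    rw [hk]; field_simp
  have hsplit : ((A + 2*r*c)/a) ^ q = A^q * ((1+k*c)^q / a^q) := by
    rw [← hek, mul_div_assoc, Real.mul_rpow hA0.le (by positivity), Real.div_rpow hkc ha0.le]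
  have h2r : (2:ℝ)^q * r^q = A^q * k^q := by
    rw [← Real.mul_rpow (by norm_num) hr.le, ← Real.mul_rpow hA0.le hk0.le]
    congr 1
    rw [hk]; field_simp
  have hdiv : 1 + T*C*k^q ≤ (1+k*c)^q / a^q := by
    rw [le_div_iff₀ haq]; linarith [hmain]
  have hAq0 : (0:ℝ) < A^q := Real.rpow_pos_of_pos hA0 q
  have final : A^q * (1 + T*C*k^q) ≤ A^q * ((1+k*c)^q / a^q) :=
    mul_le_mul_of_nonneg_left hdiv hAq0.le
  have expand : -(A:ℝ)^q + ((A + 2*r*c)/a)^q - (2:ℝ)^q * r^q * C * T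
      = A^q * ((1+k*c)^q / a^q) - A^q * (1 + T*C*k^q) := by
    rw [hsplit, h2r]; ring
  have : (0:ℝ) ≤ -(A:ℝ)^q + ((A + 2*r*c)/a)^q - (2:ℝ)^q * r^q * C * T := by
    rw [expand]; linarith
  calc (0:ℝ) ≤ -(A:ℝ)^q + ((A + 2*r*c)/a)^q - (2:ℝ)^q * r^q * C * T := this
    _ = -(1 + r ^ 2) ^ (p / 2)
      + ((1 + r ^ 2 + 2 * r * Real.cos t) / (1 + Real.cos (π / p))) ^ (p / 2)
      - (2 : ℝ) ^ (p / 2) * r ^ (p / 2) * Real.cos (p * t / 2) * Real.tan (π / (2 * p)) := by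
        rw [hA, ha, hq, hc, hC, hT]
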